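/- arXiv:2505.04820 — 2 statements merged into one kernel-verified Lean document; each statement's English description precedes it below -/
import Mathlib

section
/- Let h : ℂ^N → ℝ be convex and differentiable, let W ∈ ℂ^{N×N} be Hermitian positive definite, let C ⊆ ℂ^N be a nonempty closed convex set, let α > 0, and let g ∈ ℂ^N. Fix x ∈ C and let x̄⁺ ∈ C be a minimizer over C of x̄ ↦ S_h(x̄, x, g, W, α). Define the generalized gradient mapping G = (1/α)(x − x̄⁺). Then D_h^C(x, g, W, α) ≥ ‖G‖_W². -/
open scoped ComplexOrder

noncomputable section

/-- `ℂ^N` with the standard complex inner product (conjugate-linear in the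
first argument) and the induced norm. -/
abbrev EC (N : ℕ) := EuclideanSpace ℂ (Fin N)

/-- Weighted squared norm `‖z‖_W² = zᴴ W z` (its real part, which is the full
value when `W` is Hermitian). -/
def wnorm2 {N : ℕ} (W : Matrix (Fin N) (Fin N) ℂ) (z : EC N) : ℝ :=
  (dotProduct (fun i => starRingEnd ℂ (z i)) (W.mulVec (fun i => z i))).re

/-- Surrogate `S_h(x̄, x, g, W, α) = Re⟨g, x̄ − x⟩ + (1/(2α))‖x̄ − x‖_W² + h(x̄) − h(x)`. -/
def Sh {N : ℕ} (h : EC N → ℝ) (W : Matrix (Fin N) (Fin N) ℂ) (α : ℝ)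
    (g x xb : EC N) : ℝ :=
  (inner ℂ g (xb - x) : ℂ).re + (1 / (2 * α)) * wnorm2 W (xb - x) + h xb - h x

/-- `D_h^C(x, g, W, α) = −(2/α)·inf_{x̄ ∈ C} S_h(x̄, x, g, W, α)`. -/
def Dh {N : ℕ} (h : EC N → ℝ) (C : Set (EC N)) (W : Matrix (Fin N) (Fin N) ℂ)
    (α : ℝ) (g x : EC N) : ℝ :=
  -(2 / α) * sInf ((fun xb => Sh h W α g x xb) '' C)

/-- The real-linear continuous functional `d ↦ Re⟨g, d⟩`, used to say that a
real-differentiable `f : ℂ^N → ℝ` has gradient `g` at a point. -/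
def gradDual {N : ℕ} (g : EC N) : EC N →L[ℝ] ℝ :=
  Complex.reCLM.comp ((innerSL ℂ g).restrictScalars ℝ)

/-- The rank-one matrix `u·uᴴ` with entries `uᵢ · conj(uⱼ)`. -/
def rankOne {N : ℕ} (u : EC N) : Matrix (Fin N) (Fin N) ℂ :=
  Matrix.vecMulVec (fun i => u i) (fun i => starRingEnd ℂ (u i))

end

lemma wnorm2_smul_real {N : ℕ} (W : Matrix (Fin N) (Fin N) ℂ) (c : ℝ) (z : EC N) :
    wnorm2 W (c • z) = c^2 * wnorm2 W z := by
  have h1 : (fun i => starRingEnd ℂ ((c • z) i)) = (c:ℂ) • (fun i => starRingEnd ℂ (z i)) := by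
    funext i
    simp [PiLp.smul_apply, Complex.real_smul, map_mul]
  have h2 : (fun i => (c • z) i) = (c:ℂ) • (fun i => z i) := by
    funext i
    simp [PiLp.smul_apply, Complex.real_smul]
  have key : dotProduct (fun i => starRingEnd ℂ ((c • z) i)) (W.mulVec (fun i => (c • z) i))
      = ((c^2 : ℝ) : ℂ) * dotProduct (fun i => starRingEnd ℂ (z i)) (W.mulVec (fun i => z i)) := by
    rw [h1, h2, Matrix.mulVec_smul, smul_dotProduct, dotProduct_smul]
    simp only [smul_eq_mul]
    push_cast
    ring
  simp only [wnorm2, key, Complex.re_ofReal_mul]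

lemma wnorm2_nonneg {N : ℕ} {W : Matrix (Fin N) (Fin N) ℂ} (hW : W.PosSemidef) (z : EC N) :
    0 ≤ wnorm2 W z := by
  have := hW.re_dotProduct_nonneg (fun i => z i)
  simpa [wnorm2, dotProduct, star] using this

/-- Lower bound for `D_h^C` via the gradient mapping.
With `h` convex differentiable, `W` Hermitian positive definite, `C` nonempty
closed convex, `α > 0`, `x ∈ C`, and `x̄⁺ ∈ C` a minimizer over `C` of
`x̄ ↦ S_h(x̄, x, g, W, α)`, the generalized gradient mapping
`G = (1/α)(x − x̄⁺)` satisfies `D_h^C(x, g, W, α) ≥ ‖G‖_W²`. -/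
theorem stmt2 {N : ℕ} (h : EC N → ℝ) (hconv : ConvexOn ℝ Set.univ h)
    (hdiff : Differentiable ℝ h)
    (W : Matrix (Fin N) (Fin N) ℂ) (hW : W.PosDef)
    (C : Set (EC N)) (hCne : C.Nonempty) (hCcl : IsClosed C) (hCcv : Convex ℝ C)
    (α : ℝ) (hα : 0 < α) (g : EC N) (x : EC N) (hx : x ∈ C)
    (xp : EC N) (hxp : xp ∈ C)
    (hmin : IsMinOn (fun xb => Sh h W α g x xb) C xp)
    (G : EC N) (hG : G = (1 / α) • (x - xp)) :
    Dh h C W α g x ≥ wnorm2 W G := by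
  set A : ℝ := (inner ℂ g (xp - x) : ℂ).re with hA
  set w : ℝ := wnorm2 W (xp - x) with hw
  set H : ℝ := h xp - h x with hH
  have hw0 : 0 ≤ w := wnorm2_nonneg hW.posSemidef _
  set Q : ℝ := (1/(2*α)) * w with hQdef
  clear_value A w H Q
  have hQ0 : 0 ≤ Q := by
    rw [hQdef]; exact mul_nonneg (by positivity) hw0
  have hSxp : Sh h W α g x xp = A + Q + H := by
    simp only [Sh, hA, hQdef, hw, hH]; ring
  -- key inequality for each t ∈ (0,1]
  have key : ∀ t : ℝ, 0 < t → t ≤ 1 → A + 2*Q + H ≤ t * Q := by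
    intro t ht0 ht1
    have hmem : (1 - t) • xp + t • x ∈ C :=
      hCcv hxp hx (by linarith) ht0.le (by ring)
    have hle := hmin hmem
    simp only [Set.mem_setOf_eq] at hle
    have hd : ((1 - t) • xp + t • x) - x = (1 - t) • (xp - x) := by
      module
    have hinner : (inner ℂ g ((((1 - t) • xp + t • x) - x) : EC N) : ℂ).re = (1 - t) * A := by
      rw [hd, RCLike.real_smul_eq_coe_smul (K := ℂ), inner_smul_right]
      simp [Complex.re_ofReal_mul, hA]
      left; rw [inner_sub_right, Complex.sub_re]
    have hwn : wnorm2 W (((1 - t) • xp + t • x) - x) = (1 - t)^2 * w := by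
      rw [hd, wnorm2_smul_real, ← hw]
    have hh : h ((1 - t) • xp + t • x) ≤ (1 - t) * h xp + t * h x :=
      hconv.2 (Set.mem_univ xp) (Set.mem_univ x) (by linarith) ht0.le (by ring)
    have hSxt : Sh h W α g x ((1 - t) • xp + t • x)
        ≤ (1 - t) * A + (1 - t)^2 * Q + (1 - t) * H := by
      simp only [Sh, hinner, hwn, hQdef]
      have : h ((1 - t) • xp + t • x) - h x ≤ (1 - t) * H := by
        rw [hH]; nlinarith [hh]
      nlinarith [this]
    rw [hSxp] at hle
    have hmain : A + Q + H ≤ (1 - t) * A + (1 - t)^2 * Q + (1 - t) * H :=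
      le_trans hle hSxt
    nlinarith [hmain, mul_pos ht0 ht0]
  -- pass to the limit t → 0
  have hlim : A + 2*Q + H ≤ 0 := by
    have htend : Filter.Tendsto (fun n : ℕ => (1/(n+1) : ℝ) * Q)
        Filter.atTop (nhds 0) := by
      have := tendsto_one_div_add_atTop_nhds_zero_nat.mul_const Q
      simpa using this
    refine ge_of_tendsto' htend (fun n => ?_)
    exact key (1/(n+1)) (by positivity) (by
      rw [div_le_one (by positivity)]; linarith [Nat.cast_nonneg (α := ℝ) n])
  -- sInf step
  have hbdd : BddBelow ((fun xb => Sh h W α g x xb) '' C) := by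
    refine ⟨Sh h W α g x xp, ?_⟩
    rintro _ ⟨y, hy, rfl⟩
    exact hmin hy
  have hsinf : sInf ((fun xb => Sh h W α g x xb) '' C) ≤ Sh h W α g x xp :=
    csInf_le hbdd ⟨xp, hxp, rfl⟩
  have hGval : wnorm2 W G = (2/α) * Q := by
    have hxxp : x - xp = (-1 : ℝ) • (xp - x) := by module
    rw [hG, hxxp, smul_smul, wnorm2_smul_real, hQdef, hw]
    field_simp
  have h1 : Dh h C W α g x ≥ -(2/α) * Sh h W α g x xp := by
    rw [Dh, ge_iff_le]
    have hc : -(2/α) ≤ (0:ℝ) := by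
      have : (0:ℝ) < 2/α := by positivity
      linarith
    exact mul_le_mul_of_nonpos_left hsinf hc
  have h2 : -(2/α) * Sh h W α g x xp ≥ (2/α) * Q := by
    rw [hSxp]
    have hc : (0:ℝ) ≤ 2/α := by positivity
    nlinarith [mul_nonneg hc (neg_nonneg.mpr hlim)]
  rw [hGval]
  linarith
end

section
/- Let f : ℂ^N → ℝ be differentiable (over ℝ) with L-Lipschitz gradient ∇f for some L > 0, let h : ℂ^N → ℝ be convex and differentiable, and set F = h + f. Let C ⊆ ℂ^N be a nonempty closed convex set, let B ∈ ℂ^{N×N} be Hermitian with η·I_N ⪯ B for some η > 0, and let 0 < α ≤ η/L. Fix x ∈ C and let x⁺ ∈ C be a minimizer over C of x̄ ↦ S_h(x̄, x, ∇f(x), B, α). Then (η/(2α))·‖x⁺ − x‖² ≤ F(x) − F(x⁺). -/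
open scoped ComplexOrder

lemma wnorm2_smul' {N : ℕ} (W : Matrix (Fin N) (Fin N) ℂ) (r : ℝ) (z : EC N) :
    wnorm2 W (r • z) = r^2 * wnorm2 W z := by
  have h1 : (fun i => starRingEnd ℂ ((r • z) i)) = (r:ℂ) • (fun i => starRingEnd ℂ (z i)) := by
    funext i; simp [Complex.real_smul, mul_comm]
  have h2 : (fun i => (r • z) i) = (r:ℂ) • (fun i => z i) := by
    funext i; simp [Complex.real_smul]
  rw [wnorm2, wnorm2, h1, h2, Matrix.mulVec_smul, smul_dotProduct,
    dotProduct_smul]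
  simp [smul_smul, Complex.mul_re]
  ring

lemma wnorm2_lb {N : ℕ} (B : Matrix (Fin N) (Fin N) ℂ) (η : ℝ)
    (hBlb : (B - η • (1 : Matrix (Fin N) (Fin N) ℂ)).PosSemidef) (z : EC N) :
    η * ‖z‖^2 ≤ wnorm2 B z := by
  have h0 := hBlb.dotProduct_mulVec_nonneg (fun i => z i)
  have h1 := (Complex.le_def.mp h0).1
  rw [Matrix.sub_mulVec, Matrix.smul_mulVec, Matrix.one_mulVec,
    dotProduct_sub, dotProduct_smul] at h1
  have h2 : (dotProduct (fun i => starRingEnd ℂ (z i)) (fun i => z i)).re = ‖z‖^2 := by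
    have h : (inner ℂ z z : ℂ) = dotProduct (fun i => starRingEnd ℂ (z i)) (fun i => z i) := by
      rw [PiLp.inner_apply]; simp [dotProduct, mul_comm]
      exact Finset.sum_congr rfl fun i _ => (Complex.mul_conj' _).symm
    rw [← h]
    exact_mod_cast @inner_self_eq_norm_sq ℂ _ _ _ _ z
  have hs : (star fun i => z i) = fun i => starRingEnd ℂ (z i) := rfl
  rw [hs] at h1
  simp only [Complex.sub_re, Complex.real_smul, Complex.mul_re, Complex.ofReal_re,
    Complex.ofReal_im, Complex.zero_re, zero_mul, sub_zero] at h1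
  rw [h2] at h1
  unfold wnorm2
  linarith

lemma inner_re_smul {N : ℕ} (g u : EC N) (r : ℝ) :
    ((inner ℂ g (r • u) : ℂ)).re = r * (inner ℂ g u : ℂ).re := by
  have : (r • u) = ((r:ℂ) • u) := (Complex.coe_smul r u).symm
  rw [this, inner_smul_right]
  simp [Complex.mul_re]

lemma descent_lemma {N : ℕ} (f : EC N → ℝ) (gradf : EC N → EC N) (L : ℝ)
    (hfdiff : ∀ x : EC N, HasFDerivAt f (gradDual (gradf x)) x)
    (hlip : ∀ x₁ x₂ : EC N, ‖gradf x₁ - gradf x₂‖ ≤ L * ‖x₁ - x₂‖)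
    (x y : EC N) :
    f y ≤ f x + (inner ℂ (gradf x) (y - x) : ℂ).re + L / 2 * ‖y - x‖ ^ 2 := by
  set d := y - x with hd
  set R := (inner ℂ (gradf x) d : ℂ).re with hR
  set φ : ℝ → ℝ := fun t => f (x + t • d) - t * R - L / 2 * t ^ 2 * ‖d‖ ^ 2 with hφ
  have hder : ∀ t : ℝ, HasDerivAt φ
      ((inner ℂ (gradf (x + t • d)) d : ℂ).re - R - L * t * ‖d‖ ^ 2) t := by
    intro t
    have h1 : HasDerivAt (fun t : ℝ => x + t • d) d t := by
      simpa using ((hasDerivAt_id t).smul_const d).const_add x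
    have h2 : HasDerivAt (fun t : ℝ => f (x + t • d))
        ((inner ℂ (gradf (x + t • d)) d : ℂ).re) t := by
      have := (hfdiff (x + t • d)).comp_hasDerivAt t h1
      exact this
    have h3 : HasDerivAt (fun t : ℝ => t * R) R t := by
      simpa using (hasDerivAt_id t).mul_const R
    have h4 : HasDerivAt (fun t : ℝ => L / 2 * t ^ 2 * ‖d‖ ^ 2) (L * t * ‖d‖ ^ 2) t := by
      have := ((hasDerivAt_pow 2 t).const_mul (L / 2)).mul_const (‖d‖ ^ 2)
      exact this.congr_deriv (by ring)
    exact (h2.sub h3).sub h4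
  have hmono : AntitoneOn φ (Set.Icc (0:ℝ) 1) := by
    apply antitoneOn_of_deriv_nonpos (convex_Icc 0 1)
    · have : Differentiable ℝ φ := fun t => (hder t).differentiableAt
      exact this.continuous.continuousOn
    · intro t ht
      exact (hder t).differentiableAt.differentiableWithinAt
    · intro t ht
      rw [interior_Icc] at ht
      rw [(hder t).deriv]
      have hb : (inner ℂ (gradf (x + t • d)) d : ℂ).re - R
          ≤ ‖gradf (x + t • d) - gradf x‖ * ‖d‖ := by
        have : (inner ℂ (gradf (x + t • d)) d : ℂ).re - R
            = (inner ℂ (gradf (x + t • d) - gradf x) d : ℂ).re := by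
          rw [inner_sub_left]; simp [hR]
        rw [this]
        calc (inner ℂ (gradf (x + t • d) - gradf x) d : ℂ).re
            ≤ ‖(inner ℂ (gradf (x + t • d) - gradf x) d : ℂ)‖ := Complex.re_le_norm _
          _ ≤ ‖gradf (x + t • d) - gradf x‖ * ‖d‖ := norm_inner_le_norm _ _
      have hl : ‖gradf (x + t • d) - gradf x‖ ≤ L * (t * ‖d‖) := by
        have := hlip (x + t • d) x
        simpa [norm_smul, abs_of_pos ht.1] using this
      nlinarith [norm_nonneg d, mul_le_mul_of_nonneg_right hl (norm_nonneg d)]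
  have h01 := hmono (Set.left_mem_Icc.mpr zero_le_one) (Set.right_mem_Icc.mpr zero_le_one) zero_le_one
  simp only [hφ] at h01
  have hx1 : x + (1:ℝ) • d = y := by rw [one_smul, hd]; abel
  have hx0 : x + (0:ℝ) • d = x := by simp
  rw [hx1, hx0] at h01
  simp at h01
  linarith

lemma mainpart {N : ℕ} (h : EC N → ℝ) (hconv : ConvexOn ℝ Set.univ h)
    (C : Set (EC N)) (hCcv : Convex ℝ C)
    (B : Matrix (Fin N) (Fin N) ℂ) (α : ℝ) (hα : 0 < α)
    (g : EC N) (x : EC N) (hx : x ∈ C) (xp : EC N) (hxp : xp ∈ C)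
    (hQ : 0 ≤ wnorm2 B (xp - x))
    (hmin : IsMinOn (fun xb => Sh h B α g x xb) C xp) :
    Sh h B α g x xp + 1/(2*α) * wnorm2 B (xp - x) ≤ 0 := by
  set u := xp - x with hu
  set Q := wnorm2 B u with hQdef
  set c := 1/(2*α) * Q with hc
  have hc0 : 0 ≤ c := by
    apply mul_nonneg _ hQ
    positivity
  set s := Sh h B α g x xp with hs
  have key : ∀ t : ℝ, 0 < t → t ≤ 1 → s + c ≤ t * c := by
    intro t ht0 ht1
    set xt := (1 - t) • xp + t • x with hxt
    have hxtC : xt ∈ C := hCcv hxp hx (by linarith) ht0.le (by ring)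
    have hle : s ≤ Sh h B α g x xt := hmin hxtC
    have hxtx : xt - x = (1 - t) • u := by
      rw [hxt, hu]
      module
    have hxteq : Sh h B α g x xt
        = (1-t) * (inner ℂ g u : ℂ).re + 1/(2*α) * ((1-t)^2 * Q) + h xt - h x := by
      rw [Sh, hxtx, inner_re_smul, wnorm2_smul']
    have hconvh : h xt ≤ (1-t) * h xp + t * h x :=
      hconv.2 (Set.mem_univ xp) (Set.mem_univ x) (by linarith) ht0.le (by ring)
    have hsdef : s = (inner ℂ g u : ℂ).re + c + (h xp - h x) := by
      rw [hs, Sh, hc, hQdef, hu]; ring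
    nlinarith [hle, hxteq, hconvh, hsdef]
  have : s + c ≤ 0 := by
    rcases eq_or_lt_of_le hc0 with hceq | hcpos
    · have := key 1 one_pos le_rfl
      rw [← hceq] at this ⊢
      simpa using this
    · refine le_of_forall_pos_le_add fun ε hε => ?_
      have htpos : 0 < min 1 (ε / c) := lt_min one_pos (div_pos hε hcpos)
      have := key (min 1 (ε / c)) htpos (min_le_left _ _)
      have h2 : min 1 (ε / c) * c ≤ ε := by
        calc min 1 (ε / c) * c ≤ (ε / c) * c :=
              mul_le_mul_of_nonneg_right (min_le_right _ _) hc0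
          _ = ε := div_mul_cancel₀ ε hcpos.ne'
      linarith
  linarith [this]

/-- Sufficient decrease in terms of the step length. Under
the same assumptions as Statement 11,
`(η/(2α))·‖x⁺ − x‖² ≤ F(x) − F(x⁺)`. -/
theorem stmt12 {N : ℕ} (f : EC N → ℝ) (gradf : EC N → EC N) (L : ℝ) (hL : 0 < L)
    (hfdiff : ∀ x : EC N, HasFDerivAt f (gradDual (gradf x)) x)
    (hlip : ∀ x₁ x₂ : EC N, ‖gradf x₁ - gradf x₂‖ ≤ L * ‖x₁ - x₂‖)
    (h : EC N → ℝ) (hconv : ConvexOn ℝ Set.univ h) (hdiff : Differentiable ℝ h)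
    (F : EC N → ℝ) (hF : F = fun z => h z + f z)
    (C : Set (EC N)) (hCne : C.Nonempty) (hCcl : IsClosed C) (hCcv : Convex ℝ C)
    (B : Matrix (Fin N) (Fin N) ℂ) (hBH : B.IsHermitian)
    (η : ℝ) (hη : 0 < η)
    (hBlb : (B - η • (1 : Matrix (Fin N) (Fin N) ℂ)).PosSemidef)
    (α : ℝ) (hα : 0 < α) (hαle : α ≤ η / L)
    (x : EC N) (hx : x ∈ C) (xp : EC N) (hxp : xp ∈ C)
    (hmin : IsMinOn (fun xb => Sh h B α (gradf x) x xb) C xp) :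
    (η / (2 * α)) * ‖xp - x‖ ^ 2 ≤ F x - F xp := by
  set u := xp - x with hu
  set n := ‖u‖ ^ 2 with hn
  have hn0 : 0 ≤ n := by positivity
  have hQlb : η * n ≤ wnorm2 B u := wnorm2_lb B η hBlb u
  have hQ0 : 0 ≤ wnorm2 B u := le_trans (by positivity) hQlb
  have hmain := mainpart h hconv C hCcv B α hα (gradf x) x hx xp hxp hQ0 hmin
  have hdesc := descent_lemma f gradf L hfdiff hlip x xp
  rw [← hu] at hdesc
  rw [Sh] at hmain
  rw [← hu] at hmain
  set Q := wnorm2 B u with hQ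
  set R := (inner ℂ (gradf x) u : ℂ).re with hR
  have hαL : α * L ≤ η := by
    rw [le_div_iff₀ hL] at hαle
    exact hαle
  set a := 1/(2*α) with ha
  have ha0 : 0 < a := by positivity
  have haα : a * α = 1/2 := by
    rw [ha]; field_simp
  have h5 : L/2 ≤ η * a := by
    have := mul_le_mul_of_nonneg_left hαL ha0.le
    nlinarith
  have hgoal : η / (2*α) = η * a := by
    rw [ha]; ring
  rw [hF, hgoal]
  simp only []
  rw [← hn] at hdesc
  nlinarith [mul_le_mul_of_nonneg_left hQlb ha0.le,
    mul_le_mul_of_nonneg_right h5 hn0]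
end
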